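/- Let X and Y be random variables with values in a measurable space 𝒳, whose distributions have densities f_X and f_Y with respect to a common reference measure μ on 𝒳. If f : 𝒳 → ℝ is measurable and C ∈ ℝ are such that for all x ∈ 𝒳, f_X(x) > f_Y(x) if and only if f(x) > C, then for every t ∈ ℝ, P(f(X) > t) ≥ P(f(Y) > t). -/

import Mathlib

open MeasureTheory
open scoped ENNReal

/-- Let `X`, `Y` be random variables with laws given by densities `fX`, `fY` with
respect to a common reference measure `μ`. If `f` is measurable and `C : ℝ` are such
that `fX x > fY x ↔ f x > C` for all `x`, then `P(f(X) > t) ≥ P(f(Y) > t)` for all `t`. -/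
theorem stmt10 {α : Type*} [MeasurableSpace α] (μ : Measure α)
    (fX fY : α → ℝ≥0∞) (hfX : Measurable fX) (hfY : Measurable fY)
    (hX : μ.withDensity fX Set.univ = 1) (hY : μ.withDensity fY Set.univ = 1)
    (f : α → ℝ) (hf : Measurable f) (C : ℝ)
    (hiff : ∀ x, fY x < fX x ↔ C < f x) :
    ∀ t : ℝ, μ.withDensity fY {x | t < f x} ≤ μ.withDensity fX {x | t < f x} := by
  intro t
  set A : Set α := {x | t < f x} with hA
  have hAm : MeasurableSet A := measurableSet_lt measurable_const hf
  rcases le_or_gt C t with hCt | htC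
  · -- on A, fY ≤ fX
    rw [withDensity_apply _ hAm, withDensity_apply _ hAm]
    refine setLIntegral_mono hfX fun x hx => ?_
    exact le_of_lt ((hiff x).mpr (lt_of_le_of_lt hCt hx))
  · -- on Aᶜ, fX ≤ fY
    have hcompl : μ.withDensity fX Aᶜ ≤ μ.withDensity fY Aᶜ := by
      rw [withDensity_apply _ hAm.compl, withDensity_apply _ hAm.compl]
      refine setLIntegral_mono hfY fun x hx => ?_
      have hfx : ¬ (C < f x) := by
        simp only [A, Set.mem_compl_iff, Set.mem_setOf_eq, not_lt] at hx
        exact not_lt.mpr (hx.trans htC.le)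
      exact not_lt.mp fun h => hfx ((hiff x).mp h)
    have h1 : μ.withDensity fX A + μ.withDensity fX Aᶜ = 1 := by
      rw [measure_add_measure_compl hAm, hX]
    have h2 : μ.withDensity fY A + μ.withDensity fY Aᶜ = 1 := by
      rw [measure_add_measure_compl hAm, hY]
    have hne : μ.withDensity fX Aᶜ ≠ ∞ := by
      intro h
      rw [h] at h1
      simp at h1
    have key : μ.withDensity fY A + μ.withDensity fX Aᶜ ≤
        μ.withDensity fX A + μ.withDensity fX Aᶜ := by
      calc μ.withDensity fY A + μ.withDensity fX Aᶜ
          ≤ μ.withDensity fY A + μ.withDensity fY Aᶜ := add_le_add_right hcompl _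
        _ = 1 := h2
        _ = μ.withDensity fX A + μ.withDensity fX Aᶜ := h1.symm
    exact ENNReal.le_of_add_le_add_right hne key
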